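/- Degree-4 Hessian variety is a quadric section of the Veronese: for F ∈ S⁴V with linearly independent second partial derivatives, there exists a quadratic form q on P(S²V) such that the Hessian variety of F (the closure of h_F(V(F))) equals h_F(P^n) ∩ V(q), where h_F(P^n) is the Veronese variety that is the image of the Hessian map on all of P^n. Specifically, one may take q to be a quadratic form whose pullback under h_F is proportional to F. -/

import Mathlib

open MvPolynomial

section Aux

variable {σ K : Type*} [CommRing K]

lemma degree_sub_single_add {d : σ →₀ ℕ} {i : σ} (h : d i ≠ 0) :
    (d - Finsupp.single i 1) + Finsupp.single i 1 = d := by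
  ext j
  classical
  by_cases hj : j = i
  · subst hj
    simp [Nat.sub_add_cancel (Nat.one_le_iff_ne_zero.2 h)]
  · simp [Finsupp.single_apply, Ne.symm hj, hj]

lemma Finsupp.degree_add' (a b : σ →₀ ℕ) : (a + b).degree = a.degree + b.degree := by
  simp only [Finsupp.degree_eq_weight_one, map_add]

lemma Finsupp.degree_single' (i : σ) (k : ℕ) : (Finsupp.single i k).degree = k := by
  rw [Finsupp.degree_eq_weight_one, Finsupp.weight_apply, Finsupp.sum_single_index] <;> simp

lemma degree_sub_single {d : σ →₀ ℕ} {i : σ} (h : d i ≠ 0) :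
    (d - Finsupp.single i 1).degree = d.degree - 1 := by
  conv_rhs => rw [← degree_sub_single_add h]
  rw [Finsupp.degree_add', Finsupp.degree_single']
  simp

lemma MvPolynomial.IsHomogeneous.pderiv'' [DecidableEq σ] {F : MvPolynomial σ K} {m : ℕ}
    (h : F.IsHomogeneous m) (i : σ) : (pderiv i F).IsHomogeneous (m - 1) := by
  conv_lhs => rw [F.as_sum]
  rw [map_sum]
  apply MvPolynomial.IsHomogeneous.sum
  intro d hd
  rw [pderiv_monomial]
  by_cases hdi : d i = 0
  · simp [hdi, isHomogeneous_zero]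
  · apply isHomogeneous_monomial
    rw [degree_sub_single hdi]
    rw [Finsupp.degree_eq_weight_one]
    exact congrArg (· - 1) (h (MvPolynomial.mem_support_iff.1 hd))

lemma X_mul_monomial' [DecidableEq σ] (i : σ) (s : σ →₀ ℕ) (a : K) :
    X i * monomial s a = monomial (Finsupp.single i 1 + s) a := by
  rw [X, monomial_mul, one_mul]

lemma euler_identity [Fintype σ] [DecidableEq σ] {F : MvPolynomial σ K} {m : ℕ}
    (h : F.IsHomogeneous m) : ∑ i, X i * pderiv i F = C (m : K) * F := by
  have key : ∀ i, X i * pderiv i F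
      = ∑ d ∈ F.support, X (R := K) i * pderiv i (monomial d (coeff d F)) := by
    intro i
    conv_lhs => rw [F.as_sum]
    rw [map_sum, Finset.mul_sum]
  simp_rw [key]
  rw [Finset.sum_comm]
  conv_rhs => rw [F.as_sum, Finset.mul_sum]
  apply Finset.sum_congr rfl
  intro d hd
  have hdeg : d.degree = m := by
    rw [Finsupp.degree_eq_weight_one]
    exact h (MvPolynomial.mem_support_iff.1 hd)
  have step : ∀ i : σ, X i * pderiv i (monomial d (coeff d F))
      = monomial d (coeff d F * d i) := by
    intro i
    rw [pderiv_monomial]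
    by_cases hdi : d i = 0
    · simp [hdi]
    · rw [X_mul_monomial', add_comm, degree_sub_single_add hdi]
  simp_rw [step]
  have : ∑ i : σ, monomial d (coeff d F * (d i : K))
      = monomial d (coeff d F * ∑ i : σ, (d i : K)) := by
    rw [Finset.mul_sum]
    exact (map_sum (monomial d).toAddMonoidHom _ _).symm
  rw [this, C_mul_monomial]
  have hsum : ∑ i : σ, (d i : K) = (m : K) := by
    rw [← Nat.cast_sum]
    congr 1
    rw [← hdeg, Finsupp.degree]
    exact (Finset.sum_subset (Finset.subset_univ d.support)
      (fun x _ hx => Finsupp.notMem_support_iff.1 hx)).symm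
  rw [hsum, mul_comm]

lemma eval_mul_of_isHomogeneous {q : MvPolynomial σ K} {m : ℕ} (h : q.IsHomogeneous m)
    (c : K) (x : σ → K) : eval (fun i => c * x i) q = c ^ m * eval x q := by
  rw [eval_eq, eval_eq, Finset.mul_sum]
  apply Finset.sum_congr rfl
  intro d hd
  have hdeg : ∑ i ∈ d.support, d i = m := by
    have := h (MvPolynomial.mem_support_iff.1 hd)
    have h' : d.degree = m := by rw [Finsupp.degree_eq_weight_one]; exact this
    rwa [Finsupp.degree] at h'
  simp_rw [mul_pow]
  rw [Finset.prod_mul_distrib, Finset.prod_pow_eq_pow_sum, hdeg]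
  ring

lemma degree_two_decomp [LinearOrder σ] {d : σ →₀ ℕ} (h : d.degree = 2) :
    ∃ i j : σ, i ≤ j ∧ d = Finsupp.single i 1 + Finsupp.single j 1 := by
  classical
  obtain ⟨i, hi⟩ : ∃ i, d i ≠ 0 := by
    have hne : d ≠ 0 := fun h0 => by rw [h0] at h; simp at h
    simpa using Finsupp.ne_iff.1 hne
  have hadd : (d - Finsupp.single i 1) + Finsupp.single i 1 = d := degree_sub_single_add hi
  have hd'deg : (d - Finsupp.single i 1).degree = 1 := by rw [degree_sub_single hi, h]
  obtain ⟨j, hj⟩ : ∃ j, ((d - Finsupp.single i 1 : σ →₀ ℕ)) j ≠ 0 := by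
    have hne : d - Finsupp.single i 1 ≠ 0 := fun h0 => by rw [h0] at hd'deg; simp at hd'deg
    simpa using Finsupp.ne_iff.1 hne
  have hadd2 : ((d - Finsupp.single i 1) - Finsupp.single j 1) + Finsupp.single j 1
      = d - Finsupp.single i 1 := degree_sub_single_add hj
  have hz : (d - Finsupp.single i 1) - Finsupp.single j 1 = 0 := by
    rw [← Finsupp.degree_eq_zero_iff, degree_sub_single hj, hd'deg, Nat.sub_self]
  have hde : d - Finsupp.single i 1 = Finsupp.single j 1 := by
    rw [← hadd2, hz, zero_add]
  rcases le_total i j with hij | hij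
  · exact ⟨i, j, hij, by rw [← hadd, hde, add_comm]⟩
  · exact ⟨j, i, hij, by rw [← hadd, hde]⟩

end Aux

set_option maxHeartbeats 1000000

/-- The Hessian matrix of `F` evaluated at `p`. -/
noncomputable def hessMat {K : Type*} [CommRing K] {n : ℕ}
    (F : MvPolynomial (Fin (n + 1)) K) (p : Fin (n + 1) → K) :
    Matrix (Fin (n + 1)) (Fin (n + 1)) K :=
  Matrix.of fun i j =>
    MvPolynomial.eval p (MvPolynomial.pderiv i (MvPolynomial.pderiv j F))

/-- For a quartic `F` whose Hessian map is a Veronese embedding, the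
Hessian variety `h_F(V(F))` is the intersection of the Veronese variety `h_F(Pⁿ)` with a
quadric hypersurface `V(q)`, where the pullback of `q` along `h_F` is proportional
to `F`. -/
theorem quartic_hessian_variety_is_quadric_section_of_veronese {K : Type*} [Field K]
    [IsAlgClosed K] [CharZero K] {n : ℕ}
    (F : MvPolynomial (Fin (n + 1)) K) (hF : F.IsHomogeneous 4)
    (hind : LinearIndependent K
      (fun ij : { p : Fin (n + 1) × Fin (n + 1) // p.1 ≤ p.2 } =>
        MvPolynomial.pderiv ij.1.1 (MvPolynomial.pderiv ij.1.2 F))) :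
    ∃ q : MvPolynomial (Fin (n + 1) × Fin (n + 1)) K, q.IsHomogeneous 2 ∧
      (∃ c : K, c ≠ 0 ∧
        MvPolynomial.aeval
          (fun ij : Fin (n + 1) × Fin (n + 1) =>
            MvPolynomial.pderiv ij.1 (MvPolynomial.pderiv ij.2 F)) q =
          MvPolynomial.C c * F) ∧
      { x : Projectivization K (Matrix (Fin (n + 1)) (Fin (n + 1)) K) |
          ∃ (p : Fin (n + 1) → K) (_ : p ≠ 0) (hv : hessMat F p ≠ 0),
            MvPolynomial.eval p F = 0 ∧ x = Projectivization.mk K (hessMat F p) hv } =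
        { x : Projectivization K (Matrix (Fin (n + 1)) (Fin (n + 1)) K) |
            ∃ (p : Fin (n + 1) → K) (_ : p ≠ 0) (hv : hessMat F p ≠ 0),
              x = Projectivization.mk K (hessMat F p) hv } ∩
          { x | ∀ (A : Matrix (Fin (n + 1)) (Fin (n + 1)) K) (hA : A ≠ 0),
              x = Projectivization.mk K A hA →
                MvPolynomial.eval (fun ij : Fin (n + 1) × Fin (n + 1) => A ij.1 ij.2) q
                  = 0 } := by
  classical
  set g : Fin (n + 1) × Fin (n + 1) → MvPolynomial (Fin (n + 1)) K :=
    fun ij => pderiv ij.1 (pderiv ij.2 F) with hgdef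
  have hD2 : ∀ ij : Fin (n + 1) × Fin (n + 1), (g ij).IsHomogeneous 2 := by
    intro ij
    have := (hF.pderiv'' ij.2).pderiv'' ij.1
    norm_num at this
    exact this
  set ι := { p : Fin (n + 1) × Fin (n + 1) // p.1 ≤ p.2 } with hιdef
  set W := homogeneousSubmodule (Fin (n + 1)) K 2 with hWdef
  -- the Veronese monomial family
  set e : ι → (Fin (n + 1) →₀ ℕ) :=
    fun ij => Finsupp.single ij.1.1 1 + Finsupp.single ij.1.2 1 with hedef
  have he : Function.Injective e := by
    rintro ⟨⟨i, j⟩, hij⟩ ⟨⟨k, l⟩, hkl⟩ h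
    simp only [hedef] at h
    have v1 := DFunLike.congr_fun h i
    have v2 := DFunLike.congr_fun h.symm k
    simp only [Finsupp.add_apply, Finsupp.single_apply] at v1 v2
    have hik : i = k := by
      rcases lt_trichotomy i k with hlt | heq | hgt
      · exfalso
        have hk : ¬ k = i := hlt.ne'
        have hl : ¬ l = i := fun hli => absurd (hli ▸ hkl) (not_le.2 hlt)
        simp [hk, hl] at v1
      · exact heq
      · exfalso
        have hi : ¬ i = k := hgt.ne'
        have hj : ¬ j = k := fun hjk => absurd (hjk ▸ hij) (not_le.2 hgt)
        simp [hi, hj] at v2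
    subst hik
    have hjl : Finsupp.single j (1 : ℕ) = Finsupp.single l 1 := by
      exact add_left_cancel h
    have hjl2 : j = l := by
      by_contra hne
      have hv := DFunLike.congr_fun hjl j
      simp [Finsupp.single_apply, Ne.symm hne] at hv
    subst hjl2
    rfl
  -- the ambient Veronese monomial family
  set vb : ι → MvPolynomial (Fin (n + 1)) K := fun ij => monomial (e ij) 1 with hvbdef
  have hvb_ind : LinearIndependent K vb := by
    have h2 := ((basisMonomials (Fin (n + 1)) K).linearIndependent.comp e he)
    exact h2
  have hvbW : ∀ ij : ι, vb ij ∈ W := by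
    intro ij
    rw [hWdef, mem_homogeneousSubmodule]
    apply isHomogeneous_monomial
    simp [hedef, Finsupp.degree_add', Finsupp.degree_single']
  have hspan : W ≤ Submodule.span K (Set.range vb) := by
    intro w hw
    rw [hWdef, mem_homogeneousSubmodule] at hw
    rw [w.as_sum]
    apply Submodule.sum_mem
    intro d hd
    have hdeg : d.degree = 2 := by
      rw [Finsupp.degree_eq_weight_one]
      exact hw (MvPolynomial.mem_support_iff.1 hd)
    obtain ⟨i, j, hij, rfl⟩ := degree_two_decomp hdeg
    have heq : monomial (Finsupp.single i 1 + Finsupp.single j 1)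
          (coeff (Finsupp.single i 1 + Finsupp.single j 1) w)
        = (coeff (Finsupp.single i 1 + Finsupp.single j 1) w) • vb ⟨(i, j), hij⟩ := by
      simp [hvbdef, hedef, smul_monomial]
    rw [heq]
    exact Submodule.smul_mem _ _ (Submodule.subset_span ⟨⟨(i, j), hij⟩, rfl⟩)
  set bW : ι → W := fun ij => ⟨vb ij, hvbW ij⟩ with hbWdef
  set DW : ι → W := fun ij => ⟨g ij.1, hD2 ij.1⟩ with hDWdef
  have hbW_ind : LinearIndependent K bW :=
    LinearIndependent.of_comp W.subtype (by exact hvb_ind)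
  have hbW_span : ⊤ ≤ Submodule.span K (Set.range bW) := by
    rintro ⟨w, hwW⟩ -
    have hw2 : w ∈ Submodule.span K (Set.range vb) := hspan hwW
    obtain ⟨c, hc⟩ := (Submodule.mem_span_range_iff_exists_fun K).1 hw2
    have hco : (⟨w, hwW⟩ : W) = ∑ i, c i • bW i := by
      apply Subtype.ext
      show w = _
      rw [← hc]
      simp [hbWdef]
    rw [hco]
    exact Submodule.sum_mem _ fun i _ =>
      Submodule.smul_mem _ _ (Submodule.subset_span ⟨i, rfl⟩)
  let basis : Module.Basis ι K W := Module.Basis.mk hbW_ind hbW_span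
  haveI : Module.Finite K W := Module.Finite.of_basis basis
  have hcard : Fintype.card ι = Module.finrank K W :=
    (Module.finrank_eq_card_basis basis).symm
  have hDW_ind : LinearIndependent K DW :=
    LinearIndependent.of_comp W.subtype (by exact hind)
  have hDW_span : Submodule.span K (Set.range DW) = ⊤ :=
    hDW_ind.span_eq_top_of_card_eq_finrank' hcard
  have hrep : ∀ ij : Fin (n + 1) × Fin (n + 1), ∃ c : ι → K,
      ∑ kl : ι, c kl • g kl.1 = X ij.1 * X ij.2 := by
    intro ij
    have hx : (X ij.1 * X ij.2 : MvPolynomial (Fin (n + 1)) K) ∈ W := by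
      rw [hWdef, mem_homogeneousSubmodule]
      exact (isHomogeneous_X K ij.1).mul (isHomogeneous_X K ij.2)
    obtain ⟨c, hc⟩ := (Submodule.mem_span_range_iff_exists_fun K).1
      (hDW_span ▸ (Submodule.mem_top : (⟨_, hx⟩ : W) ∈ ⊤))
    refine ⟨c, ?_⟩
    have hc2 := congrArg Subtype.val hc
    simpa [hDWdef] using hc2
  choose cf hcf using hrep
  -- Euler identities
  have euler1 : ∑ j, X j * pderiv j F = C (4 : K) * F := by
    simpa using euler_identity hF
  have euler2 : ∀ j, ∑ i, X i * g (i, j) = C (3 : K) * pderiv j F := by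
    intro j
    have h3 : (pderiv j F).IsHomogeneous 3 := by
      have h4 := hF.pderiv'' j
      norm_num at h4
      exact h4
    simpa [hgdef] using euler_identity h3
  have key : ∑ ij : Fin (n + 1) × Fin (n + 1), (X ij.1 * X ij.2) * g ij
      = C (12 : K) * F := by
    rw [Fintype.sum_prod_type, Finset.sum_comm]
    have h1 : ∀ j, ∑ i, (X i * X j) * g (i, j) = C (3 : K) * (X j * pderiv j F) := by
      intro j
      have h2 : ∑ i, (X i * X j) * g (i, j) = X j * ∑ i, X i * g (i, j) := by
        rw [Finset.mul_sum]
        exact Finset.sum_congr rfl fun i _ => by ring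
      rw [h2, euler2 j]
      ring
    simp_rw [h1]
    rw [← Finset.mul_sum, euler1, ← mul_assoc, ← C_mul]
    norm_num
  -- the quadric q
  set L : Fin (n + 1) × Fin (n + 1) → MvPolynomial (Fin (n + 1) × Fin (n + 1)) K :=
    fun ij => ∑ kl : ι, C (cf ij kl) * X kl.1 with hLdef
  set q : MvPolynomial (Fin (n + 1) × Fin (n + 1)) K :=
    ∑ ij : Fin (n + 1) × Fin (n + 1), L ij * X ij with hqdef
  have hq2 : q.IsHomogeneous 2 := by
    apply IsHomogeneous.sum
    intro ij _
    have hL : (L ij).IsHomogeneous 1 := by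
      apply IsHomogeneous.sum
      intro kl _
      exact isHomogeneous_C_mul_X _ _
    exact hL.mul (isHomogeneous_X _ _)
  have hpull : aeval g q = C (12 : K) * F := by
    rw [hqdef, map_sum, ← key]
    apply Finset.sum_congr rfl
    intro ij _
    rw [map_mul, aeval_X]
    congr 1
    rw [hLdef]
    simp only [map_sum, map_mul, aeval_C, aeval_X]
    rw [← hcf ij]
    apply Finset.sum_congr rfl
    intro kl _
    rw [algebraMap_eq, Algebra.smul_def, algebraMap_eq]
  have keyEval : ∀ p : Fin (n + 1) → K,
      eval (fun ij : Fin (n + 1) × Fin (n + 1) => hessMat F p ij.1 ij.2) q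
        = 12 * eval p F := by
    intro p
    have h1 : eval p (aeval g q) = eval (fun ij => eval p (g ij)) q := by
      rw [aeval_def, algebraMap_eq, eval₂_comp_left (eval p) C g q]
      have hid : (eval p).comp (C : K →+* MvPolynomial (Fin (n + 1)) K) = RingHom.id K :=
        RingHom.ext fun a => eval_C _
      rw [hid]
      rfl
    have h2 : (fun ij : Fin (n + 1) × Fin (n + 1) => hessMat F p ij.1 ij.2)
        = fun ij => eval p (g ij) := rfl
    rw [h2, ← h1, hpull]
    simp
  have keyScale : ∀ (a : K) (M : Matrix (Fin (n + 1)) (Fin (n + 1)) K),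
      eval (fun ij : Fin (n + 1) × Fin (n + 1) => (a • M) ij.1 ij.2) q
        = a ^ 2 * eval (fun ij : Fin (n + 1) × Fin (n + 1) => M ij.1 ij.2) q := by
    intro a M
    have h3 := eval_mul_of_isHomogeneous hq2 a
      (fun ij : Fin (n + 1) × Fin (n + 1) => M ij.1 ij.2)
    simpa [Matrix.smul_apply, smul_eq_mul] using h3
  refine ⟨q, hq2, ⟨12, by norm_num, hpull⟩, ?_⟩
  ext x
  simp only [Set.mem_setOf_eq, Set.mem_inter_iff]
  constructor
  · rintro ⟨p, hp0, hv, hFp, rfl⟩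
    refine ⟨⟨p, hp0, hv, rfl⟩, ?_⟩
    intro A hA hxA
    obtain ⟨a, ha⟩ := (Projectivization.mk_eq_mk_iff K _ _ hv hA).1 hxA
    have h5 : eval (fun ij : Fin (n + 1) × Fin (n + 1) => ((a : K) • A) ij.1 ij.2) q = 0 := by
      have hh : (a : K) • A = hessMat F p := by
        rw [← ha, Units.smul_def]
      rw [hh, keyEval, hFp, mul_zero]
    rw [keyScale] at h5
    rcases mul_eq_zero.1 h5 with h | h
    · exact absurd h (pow_ne_zero 2 a.ne_zero)
    · exact h
  · rintro ⟨⟨p, hp0, hv, rfl⟩, hqx⟩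
    refine ⟨p, hp0, hv, ?_, rfl⟩
    have h0 := hqx (hessMat F p) hv rfl
    rw [keyEval] at h0
    exact (mul_eq_zero.1 h0).resolve_left (by norm_num)
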